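/- Let g be the flat light-cone metric on ℝ⁴ with components g_{uv} = g_{vu} = 1, g_{xx} = g_{yy} = 1 and all others zero, and let K be the tensor field with K_{uu} = 1 and all other components zero. Let b ∈ (0,1) and M ∈ ℝ, and set c = (b/(1−b))M². Then: (i) the vector field Υ_D with components Υ_D^v = M²u + 2v, Υ_D^x = x, Υ_D^y = y, Υ_D^u = 0 satisfies (L_{Υ_D}(g − cK))_{μν} = 2·(g_{μν} + M²K_{μν}) everywhere (i.e. the disformal condition with Ω = 1); and (ii) the vector field Υ_K with components Υ_K^u = u², Υ_K^v = (1/2)(((1+b)/(1−b))M²u² − x² − y²), Υ_K^x = ux, Υ_K^y = uy satisfies (L_{Υ_K}(g − cK))_{μν} = 2u·(g_{μν} + M²K_{μν}) everywhere (i.e. with Ω(u,v,x,y) = u). -/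

import Mathlib

/-- Partial derivative of a scalar function on ℝ^N in the i-th coordinate direction. -/
noncomputable def pd {N : ℕ} (f : (Fin N → ℝ) → ℝ) (i : Fin N) (x : Fin N → ℝ) : ℝ :=
  fderiv ℝ f x (Pi.single i 1)

/-- Lie derivative of a covariant 2-tensor field `T` along the vector field `V`. -/
noncomputable def lieD {N : ℕ} (V : (Fin N → ℝ) → Fin N → ℝ)
    (T : (Fin N → ℝ) → Fin N → Fin N → ℝ) (x : Fin N → ℝ) (μ ν : Fin N) : ℝ :=
  ∑ σ, (V x σ * pd (fun y => T y μ ν) σ x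
    + T x σ ν * pd (fun y => V y σ) μ x
    + T x μ σ * pd (fun y => V y σ) ν x)

/-- Flat light-cone metric on ℝ⁴ (coordinates (u,v,x,y) = indices (0,1,2,3)):
g_{uv} = g_{vu} = 1, g_{xx} = g_{yy} = 1, all other components zero. -/
noncomputable def lcMetric (x : Fin 4 → ℝ) (μ ν : Fin 4) : ℝ :=
  if (μ = 0 ∧ ν = 1) ∨ (μ = 1 ∧ ν = 0) then 1
  else if (μ = 2 ∧ ν = 2) ∨ (μ = 3 ∧ ν = 3) then 1
  else 0

/-- The tensor K with K_{uu} = 1 and all other components zero. -/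
noncomputable def ppK (x : Fin 4 → ℝ) (μ ν : Fin 4) : ℝ :=
  if μ = 0 ∧ ν = 0 then 1 else 0


section Aux

lemma diff_coord {N} (i : Fin N) (x : Fin N → ℝ) :
    DifferentiableAt ℝ (fun y : Fin N → ℝ => y i) x :=
  (ContinuousLinearMap.proj i : (Fin N → ℝ) →L[ℝ] ℝ).differentiableAt

@[simp] lemma pd_const {N} (c : ℝ) (i : Fin N) (x : Fin N → ℝ) :
    pd (fun _ => c) i x = 0 := by simp [pd]

@[simp] lemma pd_coord {N} (i j : Fin N) (x : Fin N → ℝ) :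
    pd (fun y => y i) j x = if i = j then 1 else 0 := by
  unfold pd
  rw [show (fun y : Fin N → ℝ => y i) = (ContinuousLinearMap.proj i : (Fin N → ℝ) →L[ℝ] ℝ) from rfl,
    ContinuousLinearMap.fderiv]
  simp [Pi.single_apply, eq_comm]

@[simp] lemma pd_coord_mul_coord {N} (i k j : Fin N) (x : Fin N → ℝ) :
    pd (fun y => y i * y k) j x
      = (if i = j then 1 else 0) * x k + x i * (if k = j then 1 else 0) := by
  unfold pd
  rw [fderiv_fun_mul (diff_coord i x) (diff_coord k x)]
  have h1 := pd_coord i j x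
  have h2 := pd_coord k j x
  unfold pd at h1 h2
  simp only [ContinuousLinearMap.add_apply, ContinuousLinearMap.smul_apply, smul_eq_mul]
  rw [h1, h2]; ring

@[simp] lemma pd_sq {N} (i j : Fin N) (x : Fin N → ℝ) :
    pd (fun y => (y i) ^ 2) j x = 2 * x i * (if i = j then 1 else 0) := by
  have : (fun y : Fin N → ℝ => (y i) ^ 2) = fun y => y i * y i := by
    funext y; ring
  rw [this, pd_coord_mul_coord]; ring

lemma pd_const_mul {N} (a : ℝ) (f : (Fin N → ℝ) → ℝ) (j : Fin N) (x : Fin N → ℝ)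
    (hf : DifferentiableAt ℝ f x) :
    pd (fun y => a * f y) j x = a * pd f j x := by
  unfold pd; rw [fderiv_const_mul hf]; simp

lemma pd_add {N} (f g : (Fin N → ℝ) → ℝ) (j : Fin N) (x : Fin N → ℝ)
    (hf : DifferentiableAt ℝ f x) (hg : DifferentiableAt ℝ g x) :
    pd (fun y => f y + g y) j x = pd f j x + pd g j x := by
  unfold pd; rw [fderiv_fun_add hf hg]; simp

lemma pd_sub {N} (f g : (Fin N → ℝ) → ℝ) (j : Fin N) (x : Fin N → ℝ)
    (hf : DifferentiableAt ℝ f x) (hg : DifferentiableAt ℝ g x) :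
    pd (fun y => f y - g y) j x = pd f j x - pd g j x := by
  unfold pd; rw [fderiv_fun_sub hf hg]; simp

@[simp] lemma pdD1 (M : ℝ) (j : Fin 4) (x : Fin 4 → ℝ) :
    pd (fun y : Fin 4 → ℝ => M ^ 2 * y 0 + 2 * y 1) j x
      = M ^ 2 * (if (0 : Fin 4) = j then 1 else 0)
        + 2 * (if (1 : Fin 4) = j then 1 else 0) := by
  rw [pd_add _ _ _ _ ((diff_coord 0 x).const_mul _) ((diff_coord 1 x).const_mul _),
    pd_const_mul _ _ _ _ (diff_coord 0 x), pd_const_mul _ _ _ _ (diff_coord 1 x),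
    pd_coord, pd_coord]

@[simp] lemma pdK1 (a : ℝ) (j : Fin 4) (x : Fin 4 → ℝ) :
    pd (fun y : Fin 4 → ℝ => (1 / 2) * (a * (y 0) ^ 2 - (y 2) ^ 2 - (y 3) ^ 2)) j x
      = (1 / 2) * (a * (2 * x 0 * (if (0 : Fin 4) = j then 1 else 0))
        - 2 * x 2 * (if (2 : Fin 4) = j then 1 else 0)
        - 2 * x 3 * (if (3 : Fin 4) = j then 1 else 0)) := by
  have d0 : DifferentiableAt ℝ (fun y : Fin 4 → ℝ => a * (y 0) ^ 2) x :=
    ((diff_coord 0 x).pow 2).const_mul a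
  have d2 : DifferentiableAt ℝ (fun y : Fin 4 → ℝ => (y 2) ^ 2) x := (diff_coord 2 x).pow 2
  have d3 : DifferentiableAt ℝ (fun y : Fin 4 → ℝ => (y 3) ^ 2) x := (diff_coord 3 x).pow 2
  rw [pd_const_mul _ _ _ _ ((d0.fun_sub d2).fun_sub d3), pd_sub _ _ _ _ (d0.fun_sub d2) d3,
    pd_sub _ _ _ _ d0 d2, pd_const_mul _ _ _ _ ((diff_coord 0 x).fun_pow 2),
    pd_sq, pd_sq, pd_sq]

end Aux

set_option maxHeartbeats 2000000 in
theorem stmt17 (b M : ℝ) (hb0 : 0 < b) (hb1 : b < 1)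
    (c : ℝ) (hc : c = (b / (1 - b)) * M ^ 2)
    (ΥD ΥK : (Fin 4 → ℝ) → Fin 4 → ℝ)
    (hΥD : ΥD = fun x μ =>
      if μ = 0 then 0
      else if μ = 1 then M ^ 2 * x 0 + 2 * x 1
      else x μ)
    (hΥK : ΥK = fun x μ =>
      if μ = 0 then (x 0) ^ 2
      else if μ = 1 then (1 / 2) * (((1 + b) / (1 - b)) * M ^ 2 * (x 0) ^ 2
        - (x 2) ^ 2 - (x 3) ^ 2)
      else x 0 * x μ) :
    (∀ x : Fin 4 → ℝ, ∀ μ ν : Fin 4,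
      lieD ΥD (fun y μ' ν' => lcMetric y μ' ν' - c * ppK y μ' ν') x μ ν
        = 2 * (lcMetric x μ ν + M ^ 2 * ppK x μ ν))
    ∧ (∀ x : Fin 4 → ℝ, ∀ μ ν : Fin 4,
      lieD ΥK (fun y μ' ν' => lcMetric y μ' ν' - c * ppK y μ' ν') x μ ν
        = 2 * x 0 * (lcMetric x μ ν + M ^ 2 * ppK x μ ν)) := by
  have hb : (1 : ℝ) - b ≠ 0 := by linarith
  subst hΥD hΥK hc
  have hfin : ∀ μ : Fin 4, μ = 0 ∨ μ = 1 ∨ μ = 2 ∨ μ = 3 := by decide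
  constructor <;> intro x μ ν <;>
    rcases hfin μ with rfl | rfl | rfl | rfl <;>
    rcases hfin ν with rfl | rfl | rfl | rfl <;>
    simp only [lieD, Fin.sum_univ_four, lcMetric, ppK, Fin.isValue, Fin.reduceEq, reduceIte,
      and_self, and_true, true_and, and_false, false_and, or_self, or_true, true_or, false_or,
      or_false, mul_zero, zero_mul, mul_one, one_mul, sub_zero, zero_sub, add_zero, zero_add,
      pd_const, pdD1, pdK1, pd_coord, pd_coord_mul_coord, pd_sq] <;>
    first
      | ring1
      | (field_simp; ring1)
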